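/- For every alternating sign matrix A of size n, I(A) ≤ β(A), where I(A) is the inversion number of A. -/

import Mathlib

/-- An alternating sign matrix: entries in {-1,0,1}, partial row/column sums in {0,1},
full row/column sums equal to 1. -/
def IsASM {n : ℕ} (A : Matrix (Fin n) (Fin n) ℤ) : Prop :=
  (∀ i j, A i j = -1 ∨ A i j = 0 ∨ A i j = 1) ∧
  (∀ i j, (∑ k ∈ Finset.Iic j, A i k) = 0 ∨ (∑ k ∈ Finset.Iic j, A i k) = 1) ∧
  (∀ i j, (∑ k ∈ Finset.Iic i, A k j) = 0 ∨ (∑ k ∈ Finset.Iic i, A k j) = 1) ∧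
  (∀ i, (∑ k, A i k) = 1) ∧
  (∀ j, (∑ k, A k j) = 1)

/-- Corner sum matrix. -/
def cornerSum {n : ℕ} (A : Matrix (Fin n) (Fin n) ℤ) (i j : Fin n) : ℤ :=
  ∑ p ∈ Finset.Iic i, ∑ q ∈ Finset.Iic j, A p q

/-- ASM order: `A ≤ B` iff corner sums of `A` dominate those of `B`. -/
def asmLE {n : ℕ} (A B : Matrix (Fin n) (Fin n) ℤ) : Prop :=
  ∀ i j, cornerSum B i j ≤ cornerSum A i j

def asmLT {n : ℕ} (A B : Matrix (Fin n) (Fin n) ℤ) : Prop :=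
  asmLE A B ∧ ¬ asmLE B A

/-- `B` covers `A` in the poset of ASMs of size `n`. -/
def asmCovers {n : ℕ} (A B : Matrix (Fin n) (Fin n) ℤ) : Prop :=
  asmLT A B ∧ ∀ C : Matrix (Fin n) (Fin n) ℤ, IsASM C → asmLT A C → ¬ asmLT C B

/-- `A` is join-irreducible: it covers exactly one element of the ASM poset. -/
def JoinIrred {n : ℕ} (A : Matrix (Fin n) (Fin n) ℤ) : Prop :=
  IsASM A ∧ ∃! C : Matrix (Fin n) (Fin n) ℤ, IsASM C ∧ asmCovers C A

/-- `β B` = number of join-irreducible ASMs weakly below `B`. -/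
noncomputable def asmBeta {n : ℕ} (B : Matrix (Fin n) (Fin n) ℤ) : ℕ :=
  Set.ncard {A : Matrix (Fin n) (Fin n) ℤ | JoinIrred A ∧ asmLE A B}

/-- Inversion number of an ASM. -/
def asmInv {n : ℕ} (A : Matrix (Fin n) (Fin n) ℤ) : ℤ :=
  ∑ i : Fin n, ∑ j : Fin n, ∑ k : Fin n, ∑ l : Fin n,
    if i < j ∧ k < l then A j k * A i l else 0

namespace AsmAux
open Finset
variable {n : ℕ}

/-- helper: summing an `ite ((p:ℕ) < i+1)` splits off the `p = i` term. -/
lemma sum_lt_succ (f : Fin n → ℤ) (i : ℕ) (hi : i < n) :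
    (∑ p : Fin n, if (p : ℕ) < i + 1 then f p else 0)
      = (∑ p : Fin n, if (p : ℕ) < i then f p else 0) + f ⟨i, hi⟩ := by
  have h : ∀ p : Fin n, (if (p : ℕ) < i + 1 then f p else 0)
      = (if (p : ℕ) < i then f p else 0) + (if p = ⟨i, hi⟩ then f p else 0) := by
    intro p
    have : (p = ⟨i, hi⟩) ↔ ((p : ℕ) = i) := by simp [Fin.ext_iff]
    split_ifs with h1 h2 h3 h2 h3 <;> simp_all <;> omega
  rw [Finset.sum_congr rfl fun p _ => h p, Finset.sum_add_distrib]
  congr 1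
  simp

lemma sum_lt_big (f : Fin n → ℤ) (i : ℕ) (hi : n ≤ i) :
    (∑ p : Fin n, if (p : ℕ) < i then f p else 0) = ∑ p : Fin n, f p :=
  Finset.sum_congr rfl fun p _ => if_pos (lt_of_lt_of_le p.2 hi)

def rp (A : Matrix (Fin n) (Fin n) ℤ) (i : Fin n) (j : ℕ) : ℤ :=
  ∑ q : Fin n, if (q : ℕ) < j then A i q else 0

def cp (A : Matrix (Fin n) (Fin n) ℤ) (i : ℕ) (j : Fin n) : ℤ :=
  ∑ p : Fin n, if (p : ℕ) < i then A p j else 0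

lemma rp_succ (A : Matrix (Fin n) (Fin n) ℤ) (i : Fin n) (j : ℕ) (hj : j < n) :
    rp A i (j + 1) = rp A i j + A i ⟨j, hj⟩ :=
  sum_lt_succ (fun q => A i q) j hj

lemma cp_succ (A : Matrix (Fin n) (Fin n) ℤ) (i : ℕ) (j : Fin n) (hi : i < n) :
    cp A (i + 1) j = cp A i j + A ⟨i, hi⟩ j :=
  sum_lt_succ (fun p => A p j) i hi

lemma rp_eq_Iic (A : Matrix (Fin n) (Fin n) ℤ) (i : Fin n) (j : Fin n) :
    rp A i ((j : ℕ) + 1) = ∑ k ∈ Finset.Iic j, A i k := by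
  unfold rp
  have h : ∀ q : Fin n, ((q : ℕ) < (j : ℕ) + 1) ↔ q ∈ Finset.Iic j := by
    intro q; rw [Finset.mem_Iic, Fin.le_def]; omega
  rw [Finset.sum_congr rfl fun q _ => by rw [if_congr (h q) rfl rfl]]
  rw [Finset.sum_ite_mem]
  simp

lemma cp_eq_Iic (A : Matrix (Fin n) (Fin n) ℤ) (i : Fin n) (j : Fin n) :
    cp A ((i : ℕ) + 1) j = ∑ k ∈ Finset.Iic i, A k j := by
  unfold cp
  have h : ∀ p : Fin n, ((p : ℕ) < (i : ℕ) + 1) ↔ p ∈ Finset.Iic i := by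
    intro p; rw [Finset.mem_Iic, Fin.le_def]; omega
  rw [Finset.sum_congr rfl fun p _ => by rw [if_congr (h p) rfl rfl]]
  rw [Finset.sum_ite_mem]
  simp

lemma rp_big (A : Matrix (Fin n) (Fin n) ℤ) (i : Fin n) (j : ℕ) (hj : n ≤ j) :
    rp A i j = ∑ k, A i k := sum_lt_big _ j hj

lemma cp_big (A : Matrix (Fin n) (Fin n) ℤ) (i : ℕ) (j : Fin n) (hi : n ≤ i) :
    cp A i j = ∑ k, A k j := sum_lt_big _ i hi

variable {A : Matrix (Fin n) (Fin n) ℤ}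

lemma rp_01 (hA : IsASM A) (i : Fin n) (j : ℕ) : rp A i j = 0 ∨ rp A i j = 1 := by
  rcases Nat.eq_zero_or_pos j with hj | hj
  · left; simp [hj, rp]
  rcases le_or_gt j n with hjn | hjn
  · have hj1 : j - 1 < n := by omega
    have : rp A i j = rp A i ((⟨j - 1, hj1⟩ : Fin n) + 1) := by
      congr 1; simp; omega
    rw [this, rp_eq_Iic]
    exact hA.2.1 i _
  · rw [rp_big A i j (by omega)]
    right; exact hA.2.2.2.1 i

lemma cp_01 (hA : IsASM A) (i : ℕ) (j : Fin n) : cp A i j = 0 ∨ cp A i j = 1 := by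
  rcases Nat.eq_zero_or_pos i with hi | hi
  · left; simp [hi, cp]
  rcases le_or_gt i n with hin | hin
  · have hi1 : i - 1 < n := by omega
    have : cp A i j = cp A ((⟨i - 1, hi1⟩ : Fin n) + 1) j := by
      congr 1; simp; omega
    rw [this, cp_eq_Iic]
    exact hA.2.2.1 _ j
  · rw [cp_big A i j (by omega)]
    right; exact hA.2.2.2.2 j

def cs (A : Matrix (Fin n) (Fin n) ℤ) (i j : ℕ) : ℤ :=
  ∑ p : Fin n, ∑ q : Fin n, if (p : ℕ) < i ∧ (q : ℕ) < j then A p q else 0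

lemma cs_eq_sum_rp (A : Matrix (Fin n) (Fin n) ℤ) (i j : ℕ) :
    cs A i j = ∑ p : Fin n, if (p : ℕ) < i then rp A p j else 0 := by
  unfold cs rp
  refine Finset.sum_congr rfl fun p _ => ?_
  by_cases hp : (p : ℕ) < i <;> simp [hp]

lemma cs_eq_sum_cp (A : Matrix (Fin n) (Fin n) ℤ) (i j : ℕ) :
    cs A i j = ∑ q : Fin n, if (q : ℕ) < j then cp A i q else 0 := by
  unfold cs cp
  rw [Finset.sum_comm]
  refine Finset.sum_congr rfl fun q _ => ?_
  by_cases hq : (q : ℕ) < j <;> simp [hq]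

@[simp] lemma cs_zero_row (A : Matrix (Fin n) (Fin n) ℤ) (j : ℕ) : cs A 0 j = 0 := by
  simp [cs]

@[simp] lemma cs_zero_col (A : Matrix (Fin n) (Fin n) ℤ) (i : ℕ) : cs A i 0 = 0 := by
  simp [cs]

lemma cs_succ_row (A : Matrix (Fin n) (Fin n) ℤ) (i j : ℕ) (hi : i < n) :
    cs A (i + 1) j = cs A i j + rp A ⟨i, hi⟩ j := by
  rw [cs_eq_sum_rp, cs_eq_sum_rp]
  exact sum_lt_succ (fun p => rp A p j) i hi

lemma cs_succ_col (A : Matrix (Fin n) (Fin n) ℤ) (i j : ℕ) (hj : j < n) :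
    cs A i (j + 1) = cs A i j + cp A i ⟨j, hj⟩ := by
  rw [cs_eq_sum_cp, cs_eq_sum_cp]
  exact sum_lt_succ (fun q => cp A i q) j hj

lemma cs_stable_row (A : Matrix (Fin n) (Fin n) ℤ) (i j : ℕ) (hi : n ≤ i) :
    cs A i j = cs A n j := by
  unfold cs
  refine Finset.sum_congr rfl fun p _ => Finset.sum_congr rfl fun q _ => ?_
  have h1 : ((p:ℕ) < i ∧ (q:ℕ) < j) ↔ ((p:ℕ) < n ∧ (q:ℕ) < j) := by
    have := p.2; omega
  rw [if_congr h1 rfl rfl]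

lemma cs_stable_col (A : Matrix (Fin n) (Fin n) ℤ) (i j : ℕ) (hj : n ≤ j) :
    cs A i j = cs A i n := by
  unfold cs
  refine Finset.sum_congr rfl fun p _ => Finset.sum_congr rfl fun q _ => ?_
  have h1 : ((p:ℕ) < i ∧ (q:ℕ) < j) ↔ ((p:ℕ) < i ∧ (q:ℕ) < n) := by
    have := q.2; omega
  rw [if_congr h1 rfl rfl]

lemma cs_row_step (hA : IsASM A) (i j : ℕ) :
    cs A i j ≤ cs A (i + 1) j ∧ cs A (i + 1) j ≤ cs A i j + 1 := by
  rcases lt_or_ge i n with hi | hi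
  · rw [cs_succ_row A i j hi]
    rcases rp_01 hA ⟨i, hi⟩ j with h | h <;> omega
  · rw [cs_stable_row A i j hi, cs_stable_row A (i+1) j (by omega)]
    omega

lemma cs_col_step (hA : IsASM A) (i j : ℕ) :
    cs A i j ≤ cs A i (j + 1) ∧ cs A i (j + 1) ≤ cs A i j + 1 := by
  rcases lt_or_ge j n with hj | hj
  · rw [cs_succ_col A i j hj]
    rcases cp_01 hA i ⟨j, hj⟩ with h | h <;> omega
  · rw [cs_stable_col A i j hj, cs_stable_col A i (j+1) (by omega)]
    omega

lemma cs_row_lip (hA : IsASM A) (i j k : ℕ) :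
    cs A i j ≤ cs A (i + k) j ∧ cs A (i + k) j ≤ cs A i j + k := by
  induction k with
  | zero => simp
  | succ m ih =>
    have h := cs_row_step hA (i + m) j
    have : i + (m+1) = (i + m) + 1 := by omega
    rw [this]
    push_cast
    push_cast at ih
    omega

lemma cs_col_lip (hA : IsASM A) (i j k : ℕ) :
    cs A i j ≤ cs A i (j + k) ∧ cs A i (j + k) ≤ cs A i j + k := by
  induction k with
  | zero => simp
  | succ m ih =>
    have h := cs_col_step hA i (j + m)
    have : j + (m+1) = (j + m) + 1 := by omega
    rw [this]
    push_cast
    push_cast at ih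
    omega

/-- Lipschitz cone bound. -/
lemma cs_cone (hA : IsASM A) (i j p q : ℕ) :
    cs A p q ≤ cs A i j + max ((p:ℤ) - i) 0 + max ((q:ℤ) - j) 0 := by
  have h1 := (cs_row_lip hA i j (max p i - i)).2
  have h2 := (cs_col_lip hA (i + (max p i - i)) j (max q j - j)).2
  have h3 := (cs_row_lip hA p j 0).1
  have hp : p ≤ i + (max p i - i) := by omega
  have hq : q ≤ j + (max q j - j) := by omega
  have m1 := (cs_row_lip hA p q (i + (max p i - i) - p)).1
  have m2 := (cs_col_lip hA (i + (max p i - i)) q (j + (max q j - j) - q)).1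
  have e1 : p + (i + (max p i - i) - p) = i + (max p i - i) := by omega
  have e2 : q + (j + (max q j - j) - q) = j + (max q j - j) := by omega
  rw [e1] at m1
  rw [e2] at m2
  push_cast at h1 h2 m1 m2 ⊢
  omega

lemma cs_nonneg (hA : IsASM A) (i j : ℕ) : 0 ≤ cs A i j := by
  have := (cs_row_lip hA 0 j i).1
  simpa using this

lemma cs_le_row (hA : IsASM A) (i j : ℕ) : cs A i j ≤ i := by
  have := (cs_row_lip hA 0 j i).2
  simp at this
  omega

lemma cs_le_col (hA : IsASM A) (i j : ℕ) : cs A i j ≤ j := by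
  have := (cs_col_lip hA i 0 j).2
  simp at this
  omega

lemma cs_le_min (hA : IsASM A) (i j : ℕ) : cs A i j ≤ min (i:ℤ) j :=
  le_min (cs_le_row hA i j) (cs_le_col hA i j)

lemma cs_row_full (hA : IsASM A) (i : ℕ) (hi : i ≤ n) : cs A i n = i := by
  induction i with
  | zero => simp
  | succ m ih =>
    have hm : m < n := by omega
    rw [cs_succ_row A m n hm, rp_big A _ n le_rfl, hA.2.2.2.1, ih (by omega)]
    push_cast; ring

lemma cs_col_full (hA : IsASM A) (j : ℕ) (hj : j ≤ n) : cs A n j = j := by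
  induction j with
  | zero => simp
  | succ m ih =>
    have hm : m < n := by omega
    rw [cs_succ_col A n m hm, cp_big A n _ le_rfl, hA.2.2.2.2, ih (by omega)]
    push_cast; ring

lemma cs_ge (hA : IsASM A) (i j : ℕ) (hi : i ≤ n) (hj : j ≤ n) :
    (i:ℤ) + j - n ≤ cs A i j := by
  have h := (cs_col_lip hA i j (n - j)).2
  have e : j + (n - j) = n := by omega
  rw [e, cs_row_full hA i hi] at h
  push_cast at h ⊢
  omega

end AsmAux

section P3
open Finset
namespace AsmAux
variable {n : ℕ} {A B : Matrix (Fin n) (Fin n) ℤ}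

def cornerSum' (A : Matrix (Fin n) (Fin n) ℤ) (i j : Fin n) : ℤ :=
  ∑ p ∈ Finset.Iic i, ∑ q ∈ Finset.Iic j, A p q

lemma cornerSum_eq_cs (A : Matrix (Fin n) (Fin n) ℤ) (i j : Fin n) :
    cornerSum' A i j = cs A ((i:ℕ)+1) ((j:ℕ)+1) := by
  rw [cs_eq_sum_rp]
  have h : ∀ p : Fin n, (if (p:ℕ) < (i:ℕ)+1 then rp A p ((j:ℕ)+1) else 0)
      = (if p ∈ Finset.Iic i then (∑ q ∈ Finset.Iic j, A p q) else 0) := by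
    intro p
    rw [rp_eq_Iic]
    refine if_congr ?_ rfl rfl
    rw [Finset.mem_Iic, Fin.le_def]; omega
  rw [Finset.sum_congr rfl fun p _ => h p, Finset.sum_ite_mem]
  simp [cornerSum']

/-- recover entries from corner sums -/
lemma entry_eq_cs (A : Matrix (Fin n) (Fin n) ℤ) (p q : Fin n) :
    A p q = cs A ((p:ℕ)+1) ((q:ℕ)+1) - cs A (p:ℕ) ((q:ℕ)+1)
      - cs A ((p:ℕ)+1) (q:ℕ) + cs A (p:ℕ) (q:ℕ) := by
  have h1 : cs A ((p:ℕ)+1) ((q:ℕ)+1) = cs A (p:ℕ) ((q:ℕ)+1) + rp A p ((q:ℕ)+1) := by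
    have := cs_succ_row A (p:ℕ) ((q:ℕ)+1) p.2
    simpa using this
  have h2 : cs A ((p:ℕ)+1) (q:ℕ) = cs A (p:ℕ) (q:ℕ) + rp A p (q:ℕ) := by
    have := cs_succ_row A (p:ℕ) (q:ℕ) p.2
    simpa using this
  have h3 : rp A p ((q:ℕ)+1) = rp A p (q:ℕ) + A p q := by
    have := rp_succ A p (q:ℕ) q.2
    simpa using this
  omega

lemma ext_of_cs (h : ∀ i j, i ≤ n → j ≤ n → cs A i j = cs B i j) : A = B := by
  ext p q
  rw [entry_eq_cs A p q, entry_eq_cs B p q,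
    h _ _ (by omega) (by omega), h _ _ (by omega) (by omega),
    h _ _ (by omega) (by omega), h _ _ (by omega) (by omega)]
end AsmAux
end P3

namespace AsmAux
variable {n : ℕ}
lemma rp_zero' (A : Matrix (Fin n) (Fin n) ℤ) (i : Fin n) : rp A i 0 = 0 := by simp [rp]
lemma cp_zero' (A : Matrix (Fin n) (Fin n) ℤ) (j : Fin n) : cp A 0 j = 0 := by simp [cp]
end AsmAux

section P4
open Finset
namespace AsmAux
variable {n : ℕ}

/-- validity of a corner-sum-like function on the `[0,n]²` box -/
def Valid (n : ℕ) (g : ℕ → ℕ → ℤ) : Prop :=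
  (∀ j, j ≤ n → g 0 j = 0) ∧ (∀ i, i ≤ n → g i 0 = 0) ∧
  (∀ j, j ≤ n → g n j = j) ∧ (∀ i, i ≤ n → g i n = i) ∧
  (∀ i j, i < n → j ≤ n → g (i+1) j = g i j ∨ g (i+1) j = g i j + 1) ∧
  (∀ i j, i ≤ n → j < n → g i (j+1) = g i j ∨ g i (j+1) = g i j + 1)

/-- matrix reconstructed from a corner function -/
def Mg (g : ℕ → ℕ → ℤ) : Matrix (Fin n) (Fin n) ℤ :=
  fun p q => g ((p:ℕ)+1) ((q:ℕ)+1) - g (p:ℕ) ((q:ℕ)+1) - g ((p:ℕ)+1) (q:ℕ) + g (p:ℕ) (q:ℕ)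

variable {g : ℕ → ℕ → ℤ}

lemma Mg_rp (hg : Valid n g) (p : Fin n) (j : ℕ) (hj : j ≤ n) :
    rp (Mg g) p j = g ((p:ℕ)+1) j - g (p:ℕ) j := by
  induction j with
  | zero =>
    rw [rp_zero']
    · rw [hg.2.1 _ (by omega), hg.2.1 _ (by omega)]; ring
  | succ m ih =>
    have hm : m < n := by omega
    rw [rp_succ (Mg g) p m hm, ih (by omega)]
    show _ + (g ((p:ℕ)+1) (m+1) - g (p:ℕ) (m+1) - g ((p:ℕ)+1) m + g (p:ℕ) m) = _
    ring

lemma Mg_cp (hg : Valid n g) (i : ℕ) (q : Fin n) (hi : i ≤ n) :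
    cp (Mg g) i q = g i ((q:ℕ)+1) - g i (q:ℕ) := by
  induction i with
  | zero =>
    rw [cp_zero']
    · rw [hg.1 _ (by omega), hg.1 _ (by omega)]; ring
  | succ m ih =>
    have hm : m < n := by omega
    rw [cp_succ (Mg g) m q hm, ih (by omega)]
    show _ + (g (m+1) ((q:ℕ)+1) - g m ((q:ℕ)+1) - g (m+1) (q:ℕ) + g m (q:ℕ)) = _
    ring

lemma Mg_isASM (hg : Valid n g) : IsASM (Mg (n := n) g) := by
  have hrow : ∀ (p : Fin n) (j : ℕ), j ≤ n →
      rp (Mg g) p j = 0 ∨ rp (Mg g) p j = 1 := by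
    intro p j hj
    rw [Mg_rp hg p j hj]
    rcases Nat.eq_zero_or_pos j with h0 | h0
    · subst h0
      rw [hg.2.1 _ (by omega), hg.2.1 _ (by omega)]
      left; ring
    · rcases hg.2.2.2.2.1 (p:ℕ) j p.2 hj with h | h <;> omega
  have hcol : ∀ (i : ℕ) (q : Fin n), i ≤ n →
      cp (Mg g) i q = 0 ∨ cp (Mg g) i q = 1 := by
    intro i q hi
    rw [Mg_cp hg i q hi]
    rcases Nat.eq_zero_or_pos i with h0 | h0
    · subst h0
      rw [hg.1 _ (by omega), hg.1 _ (by omega)]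
      left; ring
    · rcases hg.2.2.2.2.2 i (q:ℕ) hi q.2 with h | h <;> omega
  refine ⟨?_, ?_, ?_, ?_, ?_⟩
  · intro p q
    have h1 := hrow p ((q:ℕ)+1) (by omega)
    have h2 := hrow p (q:ℕ) (by omega)
    have h3 := rp_succ (Mg g) p (q:ℕ) q.2
    have : Mg (n := n) g p q = rp (Mg g) p ((q:ℕ)+1) - rp (Mg g) p (q:ℕ) := by
      rw [h3]; simp
    omega
  · intro i j
    rw [← rp_eq_Iic]
    exact hrow i ((j:ℕ)+1) (by omega)
  · intro i j
    rw [← cp_eq_Iic]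
    exact hcol ((i:ℕ)+1) j (by omega)
  · intro i
    rw [← rp_big (Mg g) i n le_rfl, Mg_rp hg i n le_rfl,
      hg.2.2.2.1 _ (by omega), hg.2.2.2.1 _ (by omega)]
    push_cast; ring
  · intro j
    rw [← cp_big (Mg g) n j le_rfl, Mg_cp hg n j le_rfl,
      hg.2.2.1 _ (by omega), hg.2.2.1 _ (by omega)]
    push_cast; ring

lemma Mg_cs (hg : Valid n g) (i j : ℕ) (hi : i ≤ n) (hj : j ≤ n) :
    cs (Mg (n := n) g) i j = g i j := by
  induction i with
  | zero => rw [cs_zero_row, hg.1 _ hj]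
  | succ m ih =>
    have hm : m < n := by omega
    rw [cs_succ_row _ m j hm, ih (by omega), Mg_rp hg _ j hj]
    simp

end AsmAux
end P4

section P5
open Finset
namespace AsmAux
variable {n : ℕ} {A B C : Matrix (Fin n) (Fin n) ℤ}

lemma box_le (h : ∀ p q, p ≤ n → q ≤ n → cs B p q ≤ cs A p q) : asmLE A B := by
  intro i j
  rw [show cornerSum B i j = cornerSum' B i j from rfl,
      show cornerSum A i j = cornerSum' A i j from rfl,
      cornerSum_eq_cs, cornerSum_eq_cs]
  exact h _ _ (by omega) (by omega)

lemma le_box (h : asmLE A B) : ∀ p q, p ≤ n → q ≤ n → cs B p q ≤ cs A p q := by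
  intro p q hp hq
  rcases Nat.eq_zero_or_pos p with h0 | h0
  · subst h0; simp
  rcases Nat.eq_zero_or_pos q with h1 | h1
  · subst h1; simp
  have hpn : p - 1 < n := by omega
  have hqn : q - 1 < n := by omega
  have := h ⟨p-1, hpn⟩ ⟨q-1, hqn⟩
  rw [show cornerSum B _ _ = cornerSum' B ⟨p-1,hpn⟩ ⟨q-1,hqn⟩ from rfl,
      show cornerSum A _ _ = cornerSum' A ⟨p-1,hpn⟩ ⟨q-1,hqn⟩ from rfl,
      cornerSum_eq_cs, cornerSum_eq_cs] at this
  simpa [show (p-1)+1 = p by omega, show (q-1)+1 = q by omega] using this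

lemma asmLE_refl (A : Matrix (Fin n) (Fin n) ℤ) : asmLE A A := fun _ _ => le_rfl

lemma eq_of_le_le (h1 : asmLE A B) (h2 : asmLE B A) : A = B :=
  ext_of_cs fun i j hi hj => le_antisymm (le_box h2 i j hi hj) (le_box h1 i j hi hj)

lemma asmLT_iff : asmLT A B ↔ asmLE A B ∧ A ≠ B := by
  constructor
  · rintro ⟨h1, h2⟩
    refine ⟨h1, fun he => h2 ?_⟩
    subst he; exact asmLE_refl A
  · rintro ⟨h1, h2⟩
    exact ⟨h1, fun hba => h2 (eq_of_le_le h1 hba)⟩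
end AsmAux
end P5

section P6
open Finset
namespace AsmAux
variable {n : ℕ}

def gJ (i j : ℕ) (v : ℤ) : ℕ → ℕ → ℤ :=
  fun p q => min (min (p:ℤ) q) (v + max ((p:ℤ) - i) 0 + max ((q:ℤ) - j) 0)

def gJ' (i j : ℕ) (v : ℤ) : ℕ → ℕ → ℤ :=
  fun p q => gJ i j v p q + (if p = i ∧ q = j then 1 else 0)

/-- hypotheses on the parameters -/
def Hyp (n i j : ℕ) (v : ℤ) : Prop :=
  1 ≤ i ∧ 1 ≤ j ∧ v + 1 ≤ i ∧ v + 1 ≤ j ∧ 0 ≤ v ∧ (i:ℤ) + j ≤ v + n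

lemma Hyp.i_le {n i j : ℕ} {v : ℤ} (h : Hyp n i j v) : i ≤ n - 1 := by
  obtain ⟨h1, h2, h3, h4, h5, h6⟩ := h; omega

lemma Hyp.j_le {n i j : ℕ} {v : ℤ} (h : Hyp n i j v) : j ≤ n - 1 := by
  obtain ⟨h1, h2, h3, h4, h5, h6⟩ := h; omega

lemma valid_gJ {i j : ℕ} {v : ℤ} (h : Hyp n i j v) : Valid n (gJ i j v) := by
  obtain ⟨h1, h2, h3, h4, h5, h6⟩ := h
  refine ⟨?_, ?_, ?_, ?_, ?_, ?_⟩ <;> intros <;> simp only [gJ] <;> push_cast <;> omega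

lemma valid_gJ' {i j : ℕ} {v : ℤ} (h : Hyp n i j v) : Valid n (gJ' i j v) := by
  obtain ⟨h1, h2, h3, h4, h5, h6⟩ := h
  refine ⟨?_, ?_, ?_, ?_, ?_, ?_⟩ <;> intros <;> simp only [gJ', gJ] <;>
    split_ifs <;> push_cast <;> omega

def Jm (n i j : ℕ) (v : ℤ) : Matrix (Fin n) (Fin n) ℤ := Mg (gJ i j v)

def Cm (n i j : ℕ) (v : ℤ) : Matrix (Fin n) (Fin n) ℤ := Mg (gJ' i j v)

variable {i j : ℕ} {v : ℤ}

lemma Jm_isASM (h : Hyp n i j v) : IsASM (Jm n i j v) := Mg_isASM (valid_gJ h)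
lemma Cm_isASM (h : Hyp n i j v) : IsASM (Cm n i j v) := Mg_isASM (valid_gJ' h)

lemma Jm_cs (h : Hyp n i j v) (p q : ℕ) (hp : p ≤ n) (hq : q ≤ n) :
    cs (Jm n i j v) p q = gJ i j v p q := Mg_cs (valid_gJ h) p q hp hq

lemma Cm_cs (h : Hyp n i j v) (p q : ℕ) (hp : p ≤ n) (hq : q ≤ n) :
    cs (Cm n i j v) p q = gJ' i j v p q := Mg_cs (valid_gJ' h) p q hp hq

end AsmAux
end P6

section P7
open Finset
namespace AsmAux
variable {n i j : ℕ} {v : ℤ} {A C X : Matrix (Fin n) (Fin n) ℤ}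

lemma Jm_le (h : Hyp n i j v) (hA : IsASM A) (hv : cs A i j ≤ v) :
    asmLE (Jm n i j v) A := by
  refine box_le fun p q hp hq => ?_
  rw [Jm_cs h p q hp hq]
  have h1 := cs_le_min hA p q
  have h2 := cs_cone hA i j p q
  simp only [gJ]
  omega

lemma below_Jm (h : Hyp n i j v) (hC : IsASM C) (hlt : asmLT C (Jm n i j v)) :
    ∀ p q, p ≤ n → q ≤ n → gJ' i j v p q ≤ cs C p q := by
  have hin : i ≤ n := by have := h.i_le; omega
  have hjn : j ≤ n := by have := h.j_le; omega
  have hb : ∀ p q, p ≤ n → q ≤ n → gJ i j v p q ≤ cs C p q := by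
    intro p q hp hq
    have := le_box hlt.1 p q hp hq
    rwa [Jm_cs h p q hp hq] at this
  have hne : C ≠ Jm n i j v := by
    intro he
    exact hlt.2 (he ▸ asmLE_refl C)
  have key : v + 1 ≤ cs C i j := by
    by_contra hk
    push_neg at hk
    have hcs : ∀ p q, p ≤ n → q ≤ n → cs C p q = gJ i j v p q := by
      intro p q hp hq
      have h1 := cs_le_min hC p q
      have h2 := cs_cone hC i j p q
      have h3 := hb p q hp hq
      simp only [gJ] at *
      omega
    exact hne (ext_of_cs fun p q hp hq => by
      rw [hcs p q hp hq, ← Jm_cs h p q hp hq])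
  intro p q hp hq
  simp only [gJ']
  split_ifs with hc
  · have hv' : gJ i j v p q = v := by
      obtain ⟨a1, a2, a3, a4, a5, a6⟩ := h
      simp only [gJ]; omega
    have hce : cs C p q = cs C i j := by rw [hc.1, hc.2]
    omega
  · have := hb p q hp hq
    omega

lemma Cm_lt_Jm (h : Hyp n i j v) : asmLT (Cm n i j v) (Jm n i j v) := by
  have hin : i ≤ n := by have := h.i_le; omega
  have hjn : j ≤ n := by have := h.j_le; omega
  rw [asmLT_iff]
  constructor
  · refine box_le fun p q hp hq => ?_
    rw [Jm_cs h p q hp hq, Cm_cs h p q hp hq]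
    simp only [gJ']
    split_ifs <;> omega
  · intro he
    have h1 : cs (Cm n i j v) i j = cs (Jm n i j v) i j := by rw [he]
    rw [Jm_cs h i j hin hjn, Cm_cs h i j hin hjn] at h1
    simp only [gJ'] at h1
    split_ifs at h1 with hcond
    · omega
    · exact hcond (by simp)

lemma covers_Cm (h : Hyp n i j v) : asmCovers (Cm n i j v) (Jm n i j v) := by
  refine ⟨Cm_lt_Jm h, fun X hX h1 h2 => ?_⟩
  -- h1 : asmLT Cm X, h2 : asmLT X Jm
  have hbelow := below_Jm h hX h2
  have hle : ∀ p q, p ≤ n → q ≤ n → cs X p q = gJ' i j v p q := by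
    intro p q hp hq
    have h3 := le_box h1.1 p q hp hq
    rw [Cm_cs h p q hp hq] at h3
    exact le_antisymm h3 (hbelow p q hp hq)
  have : X = Cm n i j v :=
    ext_of_cs fun p q hp hq => by rw [hle p q hp hq, Cm_cs h p q hp hq]
  rw [asmLT_iff] at h1
  exact h1.2 this.symm

lemma covers_unique (h : Hyp n i j v) (hC : IsASM C)
    (hcov : asmCovers C (Jm n i j v)) : C = Cm n i j v := by
  by_contra hne
  have hbelow := below_Jm h hC hcov.1
  have hle : asmLE C (Cm n i j v) := by
    refine box_le fun p q hp hq => ?_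
    rw [Cm_cs h p q hp hq]
    exact hbelow p q hp hq
  have hlt : asmLT C (Cm n i j v) := asmLT_iff.mpr ⟨hle, hne⟩
  exact hcov.2 (Cm n i j v) (Cm_isASM h) hlt (Cm_lt_Jm h)

lemma joinIrred_Jm (h : Hyp n i j v) : JoinIrred (Jm n i j v) := by
  refine ⟨Jm_isASM h, Cm n i j v, ⟨Cm_isASM h, covers_Cm h⟩, ?_⟩
  rintro C ⟨hC, hcov⟩
  exact covers_unique h hC hcov

lemma Jm_inj {i' j' : ℕ} {v' : ℤ} (h : Hyp n i j v) (h' : Hyp n i' j' v')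
    (he : Jm n i j v = Jm n i' j' v') : i = i' ∧ j = j' ∧ v = v' := by
  have hin : i ≤ n := by have := h.i_le; omega
  have hjn : j ≤ n := by have := h.j_le; omega
  have hin' : i' ≤ n := by have := h'.i_le; omega
  have hjn' : j' ≤ n := by have := h'.j_le; omega
  -- the unique covers agree
  have hcov' : asmCovers (Cm n i' j' v') (Jm n i j v) := he ▸ covers_Cm h'
  have hCC : Cm n i' j' v' = Cm n i j v := covers_unique h (Cm_isASM h') hcov'
  -- corner sums of the Jm agree
  have hg : ∀ p q, p ≤ n → q ≤ n → gJ i j v p q = gJ i' j' v' p q := by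
    intro p q hp hq
    rw [← Jm_cs h p q hp hq, he, Jm_cs h' p q hp hq]
  have hg' : ∀ p q, p ≤ n → q ≤ n → gJ' i j v p q = gJ' i' j' v' p q := by
    intro p q hp hq
    rw [← Cm_cs h p q hp hq, ← hCC, Cm_cs h' p q hp hq]
  have e2 := hg i j hin hjn
  have e1 := hg' i j hin hjn
  simp only [gJ'] at e1
  rw [e2] at e1
  have e3 := add_left_cancel e1
  have hij : i = i' ∧ j = j' := by
    split_ifs at e3 with c1 c2
    · exact c2
    · exact absurd e3 (by norm_num)
    · exact absurd (by simp) c1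
    · exact absurd (by simp) c1
  refine ⟨hij.1, hij.2, ?_⟩
  obtain ⟨rfl, rfl⟩ := hij
  have e3 := hg i j hin hjn
  obtain ⟨a1, a2, a3, a4, a5, a6⟩ := h
  obtain ⟨b1, b2, b3, b4, b5, b6⟩ := h'
  simp only [gJ] at e3
  omega

end AsmAux
end P7

section P8
open Finset
namespace AsmAux
variable {n : ℕ} {A : Matrix (Fin n) (Fin n) ℤ}

lemma Iic_ite (f : Fin n → ℤ) (q : Fin n) :
    ∑ l ∈ Finset.Iic q, f l = ∑ l : Fin n, if l ≤ q then f l else 0 := by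
  rw [← Finset.sum_filter]
  congr 1
  ext l
  simp [Finset.mem_Iic]

def Psum (A : Matrix (Fin n) (Fin n) ℤ) : ℤ :=
  ∑ p : Fin n, ∑ q : Fin n, (∑ l ∈ Finset.Iic q, A p l) * (∑ k ∈ Finset.Iic p, A k q)

lemma Psum_expand :
    Psum A = ∑ p : Fin n, ∑ q : Fin n, ∑ k : Fin n, ∑ l : Fin n,
      (if k ≤ p ∧ l ≤ q then A p l * A k q else 0) := by
  unfold Psum
  refine Finset.sum_congr rfl fun p _ => Finset.sum_congr rfl fun q _ => ?_
  rw [Finset.sum_mul_sum]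
  rw [Iic_ite (fun i => ∑ j ∈ Finset.Iic p, A p i * A j q) q]
  refine Eq.trans (Finset.sum_congr rfl fun i _ => ?_) Finset.sum_comm
  by_cases hi : i ≤ q
  · rw [if_pos hi, Iic_ite (fun j => A p i * A j q) p]
    exact Finset.sum_congr rfl fun j _ => by simp [hi]
  · rw [if_neg hi]; simp [hi]

abbrev Quad (n : ℕ) := Fin n × Fin n × Fin n × Fin n

lemma asmInv_expand :
    asmInv A = ∑ p : Fin n, ∑ q : Fin n, ∑ k : Fin n, ∑ l : Fin n,
      (if k < p ∧ l < q then A p l * A k q else 0) := by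
  have h1 : asmInv A = ∑ x : Quad n,
      (if x.1 < x.2.1 ∧ x.2.2.1 < x.2.2.2 then A x.2.1 x.2.2.1 * A x.1 x.2.2.2 else 0) := by
    simp only [asmInv, Fintype.sum_prod_type]
  have h2 : (∑ p : Fin n, ∑ q : Fin n, ∑ k : Fin n, ∑ l : Fin n,
      (if k < p ∧ l < q then A p l * A k q else 0)) = ∑ y : Quad n,
      (if y.2.2.1 < y.1 ∧ y.2.2.2 < y.2.1 then A y.1 y.2.2.2 * A y.2.2.1 y.2.1 else 0) := by
    simp only [Fintype.sum_prod_type]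
  rw [h1, h2]
  exact Fintype.sum_equiv
    ⟨fun x => (x.2.1, x.2.2.2, x.1, x.2.2.1), fun y => (y.2.2.1, y.1, y.2.2.2, y.2.1),
      fun x => rfl, fun y => rfl⟩ _ _ (fun x => rfl)

lemma ite_le_split (p q k l : Fin n) (X : ℤ) :
    (if k ≤ p ∧ l ≤ q then X else 0)
      = (if k < p ∧ l < q then X else 0) + (if k = p ∧ l ≤ q then X else 0)
        + (if k ≤ p ∧ l = q then X else 0) - (if k = p ∧ l = q then X else 0) := by
  split_ifs <;>
    (try ring) <;>
    (exfalso; simp only [Fin.lt_def, Fin.le_def, Fin.ext_iff] at *; omega)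

lemma q1_eq : (∑ p : Fin n, ∑ q : Fin n, ∑ k : Fin n, ∑ l : Fin n,
      (if k = p ∧ l ≤ q then A p l * A k q else 0))
    = ∑ p : Fin n, ∑ q : Fin n, ∑ l : Fin n, (if l ≤ q then A p l * A p q else 0) := by
  refine Finset.sum_congr rfl fun p _ => Finset.sum_congr rfl fun q _ => ?_
  have step : ∀ k : Fin n, (∑ l : Fin n, if k = p ∧ l ≤ q then A p l * A k q else 0)
      = (if k = p then (∑ l : Fin n, if l ≤ q then A p l * A k q else 0) else 0) := by
    intro k
    by_cases hk : k = p
    · subst hk; simp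
    · simp [hk]
  rw [Finset.sum_congr rfl fun k _ => step k, Finset.sum_ite_eq']
  simp

lemma q2_eq : (∑ p : Fin n, ∑ q : Fin n, ∑ k : Fin n, ∑ l : Fin n,
      (if k ≤ p ∧ l = q then A p l * A k q else 0))
    = ∑ p : Fin n, ∑ q : Fin n, ∑ k : Fin n, (if k ≤ p then A p q * A k q else 0) := by
  refine Finset.sum_congr rfl fun p _ => Finset.sum_congr rfl fun q _ =>
    Finset.sum_congr rfl fun k _ => ?_
  have step : ∀ l : Fin n, (if k ≤ p ∧ l = q then A p l * A k q else 0)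
      = (if l = q then (if k ≤ p then A p l * A k q else 0) else 0) := by
    intro l; split_ifs <;> simp_all
  rw [Finset.sum_congr rfl fun l _ => step l, Finset.sum_ite_eq']
  simp

lemma q3_eq : (∑ p : Fin n, ∑ q : Fin n, ∑ k : Fin n, ∑ l : Fin n,
      (if k = p ∧ l = q then A p l * A k q else 0))
    = ∑ p : Fin n, ∑ q : Fin n, A p q * A p q := by
  refine Finset.sum_congr rfl fun p _ => Finset.sum_congr rfl fun q _ => ?_
  have step : ∀ k : Fin n, (∑ l : Fin n, if k = p ∧ l = q then A p l * A k q else 0)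
      = (if k = p then (∑ l : Fin n, if l = q then A p l * A k q else 0) else 0) := by
    intro k
    by_cases hk : k = p
    · subst hk; simp
    · simp [hk]
  rw [Finset.sum_congr rfl fun k _ => step k, Finset.sum_ite_eq']
  simp

lemma Psum_eq_inv_add : Psum A = asmInv A
    + (∑ p : Fin n, ∑ q : Fin n, ∑ l : Fin n, (if l ≤ q then A p l * A p q else 0))
    + (∑ p : Fin n, ∑ q : Fin n, ∑ k : Fin n, (if k ≤ p then A p q * A k q else 0))
    - (∑ p : Fin n, ∑ q : Fin n, A p q * A p q) := by
  rw [Psum_expand, asmInv_expand, ← q1_eq, ← q2_eq, ← q3_eq]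
  rw [Finset.sum_congr rfl (fun p _ => Finset.sum_congr rfl (fun q _ =>
    Finset.sum_congr rfl (fun k _ => Finset.sum_congr rfl (fun l _ =>
      ite_le_split p q k l (A p l * A k q)))))]
  simp only [Finset.sum_add_distrib, Finset.sum_sub_distrib]

/-- symmetrization: `2 ∑_{l ≤ q} a l * a q = (∑ a)² + ∑ a²`. -/
lemma sym_sum (a : Fin n → ℤ) :
    2 * (∑ q : Fin n, ∑ l : Fin n, (if l ≤ q then a l * a q else 0))
      = (∑ l : Fin n, a l) * (∑ l : Fin n, a l) + ∑ l : Fin n, a l * a l := by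
  have hswap : (∑ q : Fin n, ∑ l : Fin n, (if l ≤ q then a l * a q else 0))
      = ∑ q : Fin n, ∑ l : Fin n, (if q ≤ l then a l * a q else 0) := by
    rw [Finset.sum_comm]
    exact Finset.sum_congr rfl fun q _ => Finset.sum_congr rfl fun l _ => by
      rw [mul_comm]
  have hpt : ∀ q l : Fin n, (if l ≤ q then a l * a q else 0) + (if q ≤ l then a l * a q else 0)
      = a l * a q + (if l = q then a l * a q else 0) := by
    intro q l
    split_ifs <;>
      (try ring) <;>
      (exfalso; simp only [Fin.lt_def, Fin.le_def, Fin.ext_iff] at *; omega)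
  have h2 : 2 * (∑ q : Fin n, ∑ l : Fin n, (if l ≤ q then a l * a q else 0))
      = ∑ q : Fin n, ∑ l : Fin n, (a l * a q + (if l = q then a l * a q else 0)) := by
    rw [two_mul]
    nth_rewrite 2 [hswap]
    rw [← Finset.sum_add_distrib]
    refine Finset.sum_congr rfl fun q _ => ?_
    rw [← Finset.sum_add_distrib]
    exact Finset.sum_congr rfl fun l _ => hpt q l
  rw [h2]
  simp only [Finset.sum_add_distrib]
  congr 1
  · rw [Finset.sum_comm, Finset.sum_mul]
    exact Finset.sum_congr rfl fun l _ => by rw [Finset.mul_sum]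
  · rw [Finset.sum_comm]
    refine Eq.trans (Finset.sum_congr rfl fun l _ => ?_) rfl
    rw [Finset.sum_ite_eq]
    simp

lemma Psum_eq (hA : IsASM A) : Psum A = asmInv A + n := by
  have hr : ∀ p : Fin n, 2 * (∑ q : Fin n, ∑ l : Fin n, (if l ≤ q then A p l * A p q else 0))
      = 1 + ∑ l : Fin n, A p l * A p l := by
    intro p
    rw [sym_sum (fun l => A p l), hA.2.2.2.1 p]
    ring
  have hc : ∀ q : Fin n, 2 * (∑ p : Fin n, ∑ k : Fin n, (if k ≤ p then A k q * A p q else 0))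
      = 1 + ∑ k : Fin n, A k q * A k q := by
    intro q
    rw [sym_sum (fun k => A k q), hA.2.2.2.2 q]
    ring
  have e := Psum_eq_inv_add (A := A)
  have h1 : 2 * (∑ p : Fin n, ∑ q : Fin n, ∑ l : Fin n, (if l ≤ q then A p l * A p q else 0))
      = n + ∑ p : Fin n, ∑ l : Fin n, A p l * A p l := by
    rw [Finset.mul_sum]
    rw [Finset.sum_congr rfl fun p _ => hr p]
    rw [Finset.sum_add_distrib]
    simp [Finset.card_univ]
  have h2 : 2 * (∑ p : Fin n, ∑ q : Fin n, ∑ k : Fin n, (if k ≤ p then A p q * A k q else 0)) =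
      n + ∑ p : Fin n, ∑ l : Fin n, A p l * A p l := by
    have hsw : (∑ p : Fin n, ∑ q : Fin n, ∑ k : Fin n, (if k ≤ p then A p q * A k q else 0))
        = ∑ q : Fin n, ∑ p : Fin n, ∑ k : Fin n, (if k ≤ p then A k q * A p q else 0) := by
      rw [Finset.sum_comm]
      exact Finset.sum_congr rfl fun p _ => Finset.sum_congr rfl fun q _ =>
        Finset.sum_congr rfl fun k _ => by rw [mul_comm]
    rw [hsw, Finset.mul_sum, Finset.sum_congr rfl fun q _ => hc q, Finset.sum_add_distrib]
    have : (∑ q : Fin n, ∑ k : Fin n, A k q * A k q) = ∑ p : Fin n, ∑ l : Fin n, A p l * A p l := by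
      rw [Finset.sum_comm]
    rw [this]
    simp [Finset.card_univ]
  have h3 : (∑ p : Fin n, ∑ q : Fin n, A p q * A p q)
      = ∑ p : Fin n, ∑ l : Fin n, A p l * A p l := rfl
  rw [h3] at e
  omega

end AsmAux
end P8

section P9
open Finset
namespace AsmAux
variable {n : ℕ} {A : Matrix (Fin n) (Fin n) ℤ}

def Dd (A : Matrix (Fin n) (Fin n) ℤ) (i j : ℕ) : ℤ := min (i:ℤ) (j:ℤ) - cs A i j

lemma Dd_nonneg (hA : IsASM A) (i j : ℕ) : 0 ≤ Dd A i j := by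
  have := cs_le_min hA i j; unfold Dd; omega

lemma Dd_rn (hA : IsASM A) (i : ℕ) (hi : i ≤ n) : Dd A i n = 0 := by
  have := cs_row_full hA i hi; unfold Dd; omega

lemma Dd_bn (hA : IsASM A) (j : ℕ) (hj : j ≤ n) : Dd A n j = 0 := by
  have := cs_col_full hA j hj; unfold Dd; omega

lemma Dd_c0 (i : ℕ) : Dd A i 0 = 0 := by
  have := cs_zero_col A i; unfold Dd; omega

lemma Dd_r0 (j : ℕ) : Dd A 0 j = 0 := by
  have := cs_zero_row A j; unfold Dd; omega

lemma hR01 (hA : IsASM A) (a b : ℕ) (ha : a < n) :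
    cs A (a+1) (b+1) - cs A a (b+1) = 0 ∨ cs A (a+1) (b+1) - cs A a (b+1) = 1 := by
  rw [cs_succ_row A a (b+1) ha]
  rcases rp_01 hA ⟨a, ha⟩ (b+1) with h | h <;> omega

lemma hu01 (hA : IsASM A) (a b : ℕ) (hb : b < n) :
    cs A (a+1) (b+1) - cs A (a+1) b = 0 ∨ cs A (a+1) (b+1) - cs A (a+1) b = 1 := by
  rw [cs_succ_col A (a+1) b hb]
  rcases cp_01 hA (a+1) ⟨b, hb⟩ with h | h <;> omega

lemma psum_to_cs :
    Psum A = ∑ a ∈ Finset.range n, ∑ b ∈ Finset.range n,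
      (cs A (a+1) (b+1) - cs A a (b+1)) * (cs A (a+1) (b+1) - cs A (a+1) b) := by
  unfold Psum
  have hcell : ∀ p q : Fin n,
      (∑ l ∈ Finset.Iic q, A p l) * (∑ k ∈ Finset.Iic p, A k q)
        = (cs A ((p:ℕ)+1) ((q:ℕ)+1) - cs A (p:ℕ) ((q:ℕ)+1))
          * (cs A ((p:ℕ)+1) ((q:ℕ)+1) - cs A ((p:ℕ)+1) (q:ℕ)) := by
    intro p q
    have h1 : (∑ l ∈ Finset.Iic q, A p l) = cs A ((p:ℕ)+1) ((q:ℕ)+1) - cs A (p:ℕ) ((q:ℕ)+1) := by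
      rw [← rp_eq_Iic, cs_succ_row A (p:ℕ) ((q:ℕ)+1) p.2]
      simp
    have h2 : (∑ k ∈ Finset.Iic p, A k q) = cs A ((p:ℕ)+1) ((q:ℕ)+1) - cs A ((p:ℕ)+1) (q:ℕ) := by
      rw [← cp_eq_Iic, cs_succ_col A ((p:ℕ)+1) (q:ℕ) q.2]
      simp
    rw [h1, h2]
  rw [Finset.sum_congr rfl fun p _ => Finset.sum_congr rfl fun q _ => hcell p q]
  rw [Fin.sum_univ_eq_sum_range (fun a => ∑ q : Fin n,
    (cs A (a+1) ((q:ℕ)+1) - cs A a ((q:ℕ)+1)) * (cs A (a+1) ((q:ℕ)+1) - cs A (a+1) (q:ℕ)))]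
  exact Finset.sum_congr rfl fun a _ => Fin.sum_univ_eq_sum_range (fun b =>
    (cs A (a+1) (b+1) - cs A a (b+1)) * (cs A (a+1) (b+1) - cs A (a+1) b)) n

lemma cellid (hA : IsASM A) (a b : ℕ) (ha : a < n) (hb : b < n) :
    (cs A (a+1) (b+1) - cs A a (b+1)) * (cs A (a+1) (b+1) - cs A (a+1) b)
      = (if a = b then 1 else 0)
        - (if a ≤ b then Dd A (a+1) (b+1) - Dd A (a+1) b else 0)
        - (if b ≤ a then Dd A (a+1) (b+1) - Dd A a (b+1) else 0)
        + (Dd A (a+1) (b+1) - Dd A a (b+1)) * (Dd A (a+1) (b+1) - Dd A (a+1) b) := by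
  have hRd : cs A (a+1) (b+1) - cs A a (b+1)
      = (if a ≤ b then (1:ℤ) else 0) - (Dd A (a+1) (b+1) - Dd A a (b+1)) := by
    unfold Dd; split_ifs <;> push_cast <;> omega
  have hud : cs A (a+1) (b+1) - cs A (a+1) b
      = (if b ≤ a then (1:ℤ) else 0) - (Dd A (a+1) (b+1) - Dd A (a+1) b) := by
    unfold Dd; split_ifs <;> push_cast <;> omega
  rw [hRd, hud]
  split_ifs <;> (try ring) <;> omega

lemma t3le (hA : IsASM A) (a b : ℕ) (ha : a < n) (hb : b < n) :
    (Dd A (a+1) (b+1) - Dd A a (b+1)) * (Dd A (a+1) (b+1) - Dd A (a+1) b)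
      ≤ (if a = b then Dd A (a+1) (b+1) else 0) := by
  have hR := hR01 hA a b ha
  have hu := hu01 hA a b hb
  rcases lt_trichotomy a b with h | h | h
  · rw [if_neg (by omega)]
    have hP : 0 ≤ Dd A (a+1) (b+1) - Dd A a (b+1) := by unfold Dd; push_cast; omega
    have hQ : Dd A (a+1) (b+1) - Dd A (a+1) b ≤ 0 := by unfold Dd; push_cast; omega
    exact mul_nonpos_iff.mpr (Or.inl ⟨hP, hQ⟩)
  · subst h
    rw [if_pos rfl]
    have hd1 := Dd_nonneg hA (a+1) a
    have hd2 := Dd_nonneg hA a (a+1)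
    have hP : Dd A (a+1) (a+1) - Dd A a (a+1) = 0 ∨ Dd A (a+1) (a+1) - Dd A a (a+1) = 1 := by
      unfold Dd; push_cast; omega
    have hQb : Dd A (a+1) (a+1) - Dd A (a+1) a ≤ Dd A (a+1) (a+1) := by omega
    have hQ0 : 0 ≤ Dd A (a+1) (a+1) - Dd A (a+1) a := by unfold Dd; push_cast; omega
    rcases hP with h | h
    · rw [h, zero_mul]
      exact Dd_nonneg hA (a+1) (a+1)
    · rw [h, one_mul]
      exact hQb
  · rw [if_neg (by omega)]
    have hP : Dd A (a+1) (b+1) - Dd A a (b+1) ≤ 0 := by unfold Dd; push_cast; omega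
    have hQ : 0 ≤ Dd A (a+1) (b+1) - Dd A (a+1) b := by unfold Dd; push_cast; omega
    exact mul_nonpos_iff.mpr (Or.inr ⟨hP, hQ⟩)

lemma tele (f : ℕ → ℤ) (a m : ℕ) :
    (∑ b ∈ Finset.range m, if a ≤ b then f (b+1) - f b else 0)
      = if a ≤ m then f m - f a else 0 := by
  induction m with
  | zero =>
    simp only [Finset.range_zero, Finset.sum_empty]
    split_ifs with h
    · have : a = 0 := by omega
      subst this; ring
    · rfl
  | succ m ih =>
    rw [Finset.sum_range_succ, ih]
    split_ifs with h1 h2 h3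
    · ring
    · omega
    · have : a = m + 1 := by omega
      subst this; ring
    · rfl

lemma stepB (hA : IsASM A) :
    Psum A ≤ n + ∑ a ∈ Finset.range n, ∑ b ∈ Finset.range n, Dd A (a+1) (b+1) := by
  rw [psum_to_cs]
  rw [Finset.sum_congr rfl fun a haa => Finset.sum_congr rfl fun b hbb =>
    cellid hA a b (Finset.mem_range.mp haa) (Finset.mem_range.mp hbb)]
  simp only [Finset.sum_add_distrib, Finset.sum_sub_distrib]
  -- E sum
  have hE : (∑ a ∈ Finset.range n, ∑ b ∈ Finset.range n, if a = b then (1:ℤ) else 0) = n := by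
    rw [Finset.sum_congr rfl fun a haa => by
      rw [Finset.sum_ite_eq (Finset.range n) a (fun _ => (1:ℤ)), if_pos haa]]
    simp
  -- T1 sum
  have hT1 : (∑ a ∈ Finset.range n, ∑ b ∈ Finset.range n,
      if a ≤ b then Dd A (a+1) (b+1) - Dd A (a+1) b else 0)
      = - ∑ a ∈ Finset.range n, Dd A (a+1) a := by
    rw [Finset.sum_congr rfl fun a haa => tele (fun t => Dd A (a+1) t) a n]
    rw [Finset.sum_congr rfl fun a haa => by
      have han := Finset.mem_range.mp haa
      rw [if_pos (by omega : a ≤ n), Dd_rn hA (a+1) (by omega)]]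
    rw [← Finset.sum_neg_distrib]
    exact Finset.sum_congr rfl fun a _ => by ring
  -- T2 sum
  have hT2 : (∑ a ∈ Finset.range n, ∑ b ∈ Finset.range n,
      if b ≤ a then Dd A (a+1) (b+1) - Dd A a (b+1) else 0)
      = - ∑ b ∈ Finset.range n, Dd A b (b+1) := by
    rw [Finset.sum_comm]
    rw [Finset.sum_congr rfl fun b hbb => tele (fun t => Dd A t (b+1)) b n]
    rw [Finset.sum_congr rfl fun b hbb => by
      have hbn := Finset.mem_range.mp hbb
      rw [if_pos (by omega : b ≤ n), Dd_bn hA (b+1) (by omega)]]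
    rw [← Finset.sum_neg_distrib]
    exact Finset.sum_congr rfl fun b _ => by ring
  -- T3 sum
  have hT3 : (∑ a ∈ Finset.range n, ∑ b ∈ Finset.range n,
      (Dd A (a+1) (b+1) - Dd A a (b+1)) * (Dd A (a+1) (b+1) - Dd A (a+1) b))
      ≤ ∑ a ∈ Finset.range n, Dd A (a+1) (a+1) := by
    refine le_trans (Finset.sum_le_sum fun a haa => Finset.sum_le_sum fun b hbb =>
      t3le hA a b (Finset.mem_range.mp haa) (Finset.mem_range.mp hbb)) ?_
    refine le_of_eq (Finset.sum_congr rfl fun a haa => ?_)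
    rw [Finset.sum_ite_eq (Finset.range n) a (fun b => Dd A (a+1) (b+1)), if_pos haa]
  -- charging
  have c1 : (∑ a ∈ Finset.range n, ∑ b ∈ Finset.range n,
      if a = b then Dd A (a+1) (b+1) else 0) = ∑ a ∈ Finset.range n, Dd A (a+1) (a+1) := by
    exact Finset.sum_congr rfl fun a haa => by
      rw [Finset.sum_ite_eq (Finset.range n) a (fun b => Dd A (a+1) (b+1)), if_pos haa]
  have c2 : (∑ a ∈ Finset.range n, ∑ b ∈ Finset.range n,
      if a = b + 1 then Dd A (a+1) (b+1) else 0) = ∑ a ∈ Finset.range n, Dd A (a+1) a := by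
    refine Finset.sum_congr rfl fun a haa => ?_
    by_cases h0 : a = 0
    · subst h0
      rw [Dd_c0]
      exact Finset.sum_eq_zero fun b _ => if_neg (by omega)
    · have hmem : a - 1 ∈ Finset.range n := by
        have := Finset.mem_range.mp haa; exact Finset.mem_range.mpr (by omega)
      rw [Finset.sum_eq_single_of_mem (a-1) hmem
        (fun b _ hb => if_neg (by omega))]
      rw [if_pos (by omega), show a - 1 + 1 = a by omega]
  have c3 : (∑ a ∈ Finset.range n, ∑ b ∈ Finset.range n,
      if b = a + 1 then Dd A (a+1) (b+1) else 0) = ∑ b ∈ Finset.range n, Dd A b (b+1) := by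
    rw [Finset.sum_comm]
    refine Finset.sum_congr rfl fun b hbb => ?_
    by_cases h0 : b = 0
    · subst h0
      rw [Dd_r0]
      exact Finset.sum_eq_zero fun a _ => if_neg (by omega)
    · have hmem : b - 1 ∈ Finset.range n := by
        have := Finset.mem_range.mp hbb; exact Finset.mem_range.mpr (by omega)
      rw [Finset.sum_eq_single_of_mem (b-1) hmem
        (fun a _ hb2 => if_neg (by omega))]
      rw [if_pos (by omega), show b - 1 + 1 = b by omega]
  have charge : (∑ a ∈ Finset.range n, Dd A (a+1) (a+1))
      + (∑ a ∈ Finset.range n, Dd A (a+1) a) + (∑ b ∈ Finset.range n, Dd A b (b+1))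
      ≤ ∑ a ∈ Finset.range n, ∑ b ∈ Finset.range n, Dd A (a+1) (b+1) := by
    rw [← c1, ← c2, ← c3]
    rw [← Finset.sum_add_distrib, ← Finset.sum_add_distrib]
    refine Finset.sum_le_sum fun a _ => ?_
    rw [← Finset.sum_add_distrib, ← Finset.sum_add_distrib]
    refine Finset.sum_le_sum fun b _ => ?_
    have hd := Dd_nonneg hA (a+1) (b+1)
    split_ifs <;> omega
  rw [hE, hT1, hT2]
  linarith
end AsmAux
end P9

section P10
open Finset
namespace AsmAux
variable {n : ℕ} {A : Matrix (Fin n) (Fin n) ℤ}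

lemma finite_S (A : Matrix (Fin n) (Fin n) ℤ) :
    {X : Matrix (Fin n) (Fin n) ℤ | JoinIrred X ∧ asmLE X A}.Finite := by
  have hB : {X : Matrix (Fin n) (Fin n) ℤ | ∀ p q, X p q ∈ Set.Icc (-1:ℤ) 1}.Finite := by
    have : {X : Matrix (Fin n) (Fin n) ℤ | ∀ p q, X p q ∈ Set.Icc (-1:ℤ) 1}
        ⊆ Set.pi Set.univ (fun _ : Fin n =>
            Set.pi Set.univ (fun _ : Fin n => Set.Icc (-1:ℤ) 1)) := by
      intro X hX
      intro p _
      intro q _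
      exact hX p q
    exact Set.Finite.subset
      (Set.Finite.pi fun _ => Set.Finite.pi fun _ => Set.finite_Icc _ _) this
  refine hB.subset ?_
  rintro X ⟨hJ, _⟩
  intro p q
  rcases hJ.1.1 p q with h | h | h <;> simp [h]

noncomputable def Tri (A : Matrix (Fin n) (Fin n) ℤ) : Finset ((_ : ℕ × ℕ) × ℤ) :=
  (Finset.range n ×ˢ Finset.range n).sigma
    (fun ab => Finset.Ico (cs A (ab.1+1) (ab.2+1)) (min ((ab.1:ℤ)+1) ((ab.2:ℤ)+1)))

lemma Tri_card (hA : IsASM A) :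
    ((Tri A).card : ℤ) = ∑ a ∈ Finset.range n, ∑ b ∈ Finset.range n, Dd A (a+1) (b+1) := by
  unfold Tri
  rw [Finset.card_sigma, Finset.sum_product]
  push_cast
  refine Finset.sum_congr rfl fun a _ => Finset.sum_congr rfl fun b _ => ?_
  rw [Int.card_Ico]
  rw [Int.toNat_of_nonneg (by have := Dd_nonneg hA (a+1) (b+1); unfold Dd at *; push_cast at *; omega)]
  unfold Dd; push_cast; ring

lemma Tri_hyp (hA : IsASM A) {a b : ℕ} {v : ℤ}
    (hs : (⟨(a, b), v⟩ : (_ : ℕ × ℕ) × ℤ) ∈ Tri A) :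
    Hyp n (a+1) (b+1) v ∧ cs A (a+1) (b+1) ≤ v := by
  rw [Tri, Finset.mem_sigma, Finset.mem_product, Finset.mem_range, Finset.mem_range,
    Finset.mem_Ico] at hs
  dsimp only at hs
  obtain ⟨⟨ha, hb⟩, hv1, hv2⟩ := hs
  have h0 := cs_nonneg hA (a+1) (b+1)
  have hge := cs_ge hA (a+1) (b+1) (by omega) (by omega)
  refine ⟨⟨by omega, by omega, by push_cast; omega, by push_cast; omega, by omega, ?_⟩, hv1⟩
  push_cast
  push_cast at hge
  omega

lemma card_le_beta (hA : IsASM A) : (Tri A).card ≤ asmBeta A := by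
  classical
  set S := {X : Matrix (Fin n) (Fin n) ℤ | JoinIrred X ∧ asmLE X A} with hS
  set Φ : ((_ : ℕ × ℕ) × ℤ) → Matrix (Fin n) (Fin n) ℤ :=
    fun s => Jm n (s.1.1+1) (s.1.2+1) s.2 with hΦ
  have himg : ∀ s ∈ Tri A, Φ s ∈ S := by
    rintro ⟨⟨a, b⟩, v⟩ hs
    obtain ⟨hhyp, hle⟩ := Tri_hyp hA hs
    exact ⟨joinIrred_Jm hhyp, Jm_le hhyp hA hle⟩
  have hinj : Set.InjOn Φ ↑(Tri A) := by
    rintro ⟨⟨a, b⟩, v⟩ hs ⟨⟨a', b'⟩, v'⟩ ht he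
    obtain ⟨hhs, _⟩ := Tri_hyp hA hs
    obtain ⟨hht, _⟩ := Tri_hyp hA ht
    obtain ⟨h1, h2, h3⟩ := Jm_inj hhs hht he
    simp only [Sigma.mk.inj_iff, Prod.mk.injEq, heq_eq_eq]
    exact ⟨⟨by omega, by omega⟩, by omega⟩
  have h1 : (Tri A).card = (Φ '' ↑(Tri A)).ncard := by
    rw [Set.ncard_image_of_injOn hinj, Set.ncard_coe_finset]
  have h2 : (Φ '' ↑(Tri A)).ncard ≤ S.ncard := by
    refine Set.ncard_le_ncard ?_ (finite_S A)
    rintro X ⟨s, hs, rfl⟩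
    exact himg s hs
  have hb : asmBeta A = S.ncard := rfl
  omega

theorem main (A : Matrix (Fin n) (Fin n) ℤ) (hA : IsASM A) :
    asmInv A ≤ (asmBeta A : ℤ) := by
  have h1 := Psum_eq hA
  have h2 := stepB hA
  have h3 := Tri_card hA
  have h4 := card_le_beta hA
  omega
end AsmAux
end P10

theorem asmInv_le_asmBeta {n : ℕ} (A : Matrix (Fin n) (Fin n) ℤ) (hA : IsASM A) :
    asmInv A ≤ (asmBeta A : ℤ) := by
  exact AsmAux.main A hA
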